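/- If each borrow-rate function bᵢ : ℝ → ℝ is convex and monotone nondecreasing on [0,∞), each ℓᵢ ≥ 1, and s ∈ ℝ, then the allocation objective G(x₀, x₁, …, x_n) = x₀·s + Σᵢ xᵢ·ℓᵢ·s − Σᵢ xᵢ·(ℓᵢ − 1)·bᵢ(xᵢ·(ℓᵢ − 1)) is a concave function on the nonnegative orthant {(x₀,…,x_n) ∈ ℝ^{n+1} : xᵢ ≥ 0 for all i}. -/
import Mathlib

lemma mul_self_convex {f : ℝ → ℝ} (hf : ConvexOn ℝ (Set.Ici (0:ℝ)) f)
    (hm : MonotoneOn f (Set.Ici (0:ℝ))) :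
    ConvexOn ℝ (Set.Ici (0:ℝ)) (fun x => x * f x) := by
  refine ⟨convex_Ici 0, ?_⟩
  intro x hx y hy a c ha hc hac
  simp only [smul_eq_mul]
  have hx0 : (0:ℝ) ≤ x := hx
  have hy0 : (0:ℝ) ≤ y := hy
  have hz : (0:ℝ) ≤ a*x + c*y := by positivity
  have hfz : f (a*x + c*y) ≤ a * f x + c * f y := by
    have := hf.2 hx hy ha hc hac
    simpa using this
  have h1 : (a*x+c*y) * f (a*x+c*y) ≤ (a*x+c*y) * (a * f x + c * f y) :=
    mul_le_mul_of_nonneg_left hfz hz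
  have h2 : 0 ≤ a*c*((y - x) * (f y - f x)) := by
    rcases le_total x y with h | h
    · exact mul_nonneg (mul_nonneg ha hc)
        (mul_nonneg (sub_nonneg.2 h) (sub_nonneg.2 (hm hx hy h)))
    · have hr : (y - x) * (f y - f x) = (x - y) * (f x - f y) := by ring
      rw [hr]
      exact mul_nonneg (mul_nonneg ha hc)
        (mul_nonneg (sub_nonneg.2 h) (sub_nonneg.2 (hm hy hx h)))
  have h3 : a * (x * f x) + c * (y * f y) - (a*x+c*y)*(a*f x + c*f y)
      = a*c*((y-x)*(f y - f x)) := by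
    have hc1 : c = 1 - a := by linarith
    subst hc1; ring
  linarith [h1, h2, h3]

/-- With convex, nondecreasing borrow-rate functions bᵢ on [0,∞), ℓᵢ ≥ 1 and
s ∈ ℝ, the allocation objective
G(x₀,x) = x₀·s + Σᵢ xᵢ·ℓᵢ·s − Σᵢ xᵢ·(ℓᵢ−1)·bᵢ(xᵢ·(ℓᵢ−1))
is concave on the nonnegative orthant. -/
theorem allocation_objective_concave
    (n : ℕ) (hn : 1 ≤ n)
    (b : Fin n → ℝ → ℝ)
    (hconv : ∀ i, ConvexOn ℝ (Set.Ici (0 : ℝ)) (b i))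
    (hmono : ∀ i, MonotoneOn (b i) (Set.Ici (0 : ℝ)))
    (L : Fin n → ℝ) (hL : ∀ i, 1 ≤ L i) (s : ℝ) :
    ConcaveOn ℝ {p : ℝ × (Fin n → ℝ) | 0 ≤ p.1 ∧ ∀ i, 0 ≤ p.2 i}
      (fun p => p.1 * s + (∑ i, p.2 i * L i * s)
        - ∑ i, p.2 i * (L i - 1) * b i (p.2 i * (L i - 1))) := by
  constructor
  · intro p hp q hq a c ha hc hac
    refine ⟨by have := hp.1; have := hq.1; simp only [Prod.fst_add, Prod.smul_fst,
      smul_eq_mul]; positivity, ?_⟩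
    intro i
    have := hp.2 i; have := hq.2 i
    simp only [Prod.snd_add, Prod.smul_snd, Pi.add_apply, Pi.smul_apply, smul_eq_mul]
    positivity
  · intro p hp q hq a c ha hc hac
    simp only [Prod.fst_add, Prod.smul_fst, Prod.snd_add, Prod.smul_snd,
      Pi.add_apply, Pi.smul_apply, smul_eq_mul]
    have key : ∀ i ∈ Finset.univ,
        (a * p.2 i + c * q.2 i) * (L i - 1) * b i ((a * p.2 i + c * q.2 i) * (L i - 1))
          ≤ a * (p.2 i * (L i - 1) * b i (p.2 i * (L i - 1)))
            + c * (q.2 i * (L i - 1) * b i (q.2 i * (L i - 1))) := by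
      intro i _
      have hg := mul_self_convex (hconv i) (hmono i)
      have hli : (0:ℝ) ≤ L i - 1 := by linarith [hL i]
      have hxi : p.2 i * (L i - 1) ∈ Set.Ici (0:ℝ) := by
        have := hp.2 i; exact mul_nonneg this hli
      have hyi : q.2 i * (L i - 1) ∈ Set.Ici (0:ℝ) := by
        have := hq.2 i; exact mul_nonneg this hli
      have := hg.2 hxi hyi ha hc hac
      simp only [smul_eq_mul] at this
      have heq : (a * p.2 i + c * q.2 i) * (L i - 1)
          = a * (p.2 i * (L i - 1)) + c * (q.2 i * (L i - 1)) := by ring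
      rw [heq]
      simpa using this
    have hsum := Finset.sum_le_sum key
    rw [Finset.sum_add_distrib, ← Finset.mul_sum, ← Finset.mul_sum] at hsum
    have hlin : ∑ i, (a * p.2 i + c * q.2 i) * L i * s
        = a * ∑ i, p.2 i * L i * s + c * ∑ i, q.2 i * L i * s := by
      rw [Finset.mul_sum, Finset.mul_sum, ← Finset.sum_add_distrib]
      exact Finset.sum_congr rfl (fun i _ => by ring)
    rw [hlin]
    linarith [hsum]
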